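/- The map C_{λ,λ+4}(X d/dx)(f) = −λ X⁽⁵⁾ f + X⁽⁴⁾ f' − 6 X⁽³⁾ f'' − 4 X'' f⁽³⁾ is a 1-cocycle on vect(1) with values in D_{λ,λ+4}. -/

import Mathlib

open Polynomial

/-- The action `L^λ_X(f) = X f' + λ X' f` of `X d/dx` on λ-densities. -/
noncomputable def Lact (lam : ℝ) (Xp f : Polynomial ℝ) : Polynomial ℝ :=
  Xp * derivative f + lam • (derivative Xp * f)

/-- `C_{λ,λ+4}(X d/dx)(f) = −λ X⁽⁵⁾ f + X⁽⁴⁾ f' − 6 X⁽³⁾ f'' − 4 X'' f⁽³⁾`. -/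
noncomputable def C4 (lam : ℝ) (Xp f : Polynomial ℝ) : Polynomial ℝ :=
  (-lam) • (derivative^[5] Xp * f) + derivative^[4] Xp * derivative f
    - (6 : ℝ) • (derivative^[3] Xp * derivative^[2] f)
    - (4 : ℝ) • (derivative^[2] Xp * derivative^[3] f)

/-- `C_{λ,λ+4}` is a 1-cocycle on `vect(1)` with values in `D_{λ,λ+4}`:
`C([X,Y]) = L^{λ+4}_X∘C(Y) − C(Y)∘L^λ_X − L^{λ+4}_Y∘C(X) + C(X)∘L^λ_Y`,
with `[X,Y] = XY' − X'Y`. -/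
theorem C4_cocycle (lam : ℝ) (Xp Yp f : Polynomial ℝ) :
    C4 lam (Xp * derivative Yp - derivative Xp * Yp) f
      = Lact (lam + 4) Xp (C4 lam Yp f) - C4 lam Yp (Lact lam Xp f)
        - Lact (lam + 4) Yp (C4 lam Xp f) + C4 lam Xp (Lact lam Yp f) := by
  simp only [C4, Lact, Function.iterate_succ, Function.iterate_zero, Function.comp_apply, id_eq]
  simp only [
    map_add, map_sub, derivative_mul, derivative_smul, Polynomial.smul_eq_C_mul, map_mul, map_neg,
    map_ofNat, Polynomial.derivative_C, Polynomial.derivative_ofNat, mul_zero, zero_mul, map_zero]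
  ring
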